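/- Let G be a progressive graph with a linear order ≺ on E(G) satisfying condition (P1). Then (G, ≺) is a POP-graph (i.e., ≺ also satisfies (P2)) if and only if (G, ≺) is an anchored UPO-graph (i.e., ≺ satisfies (U2), (U3) and (A)). -/

import Mathlib

variable {V E : Type}

/-- Edge reachability `e1 → e2`: a directed path of edges `f_0, …, f_k` with `k ≥ 1`,
`f_0 = e1`, `f_k = e2` and `t f_{i-1} = s f_i`. -/
def eReach (s t : E → V) : E → E → Prop :=
  Relation.TransGen (fun a b => t a = s b)

/-- Vertex reachability `v → w`: a directed path from `v` to `w` using at least one edge. -/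
def vReach (s t : E → V) : V → V → Prop :=
  Relation.TransGen (fun v w => ∃ e, s e = v ∧ t e = w)

/-- A directed graph is acyclic if no vertex reaches itself. -/
def Acyclic (s t : E → V) : Prop := ∀ v, ¬ vReach s t v v

/-- `I(v)`: incoming edges of `v`. -/
def inE (t : E → V) (v : V) : Set E := {e | t e = v}

/-- `O(v)`: outgoing edges of `v`. -/
def outE (s : E → V) (v : V) : Set E := {e | s e = v}

/-- Convex hull `X̄` of `X` in the linear order `le`: the interval `{y | X^- ≤ y ≤ X^+}`
(empty when `X` is empty). -/
def hull (le : E → E → Prop) (X : Set E) : Set E :=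
  {y | ∃ a ∈ X, ∃ b ∈ X, le a y ∧ le y b}

/-- The strict order associated to a linear order `le`. -/
def ltOf (le : E → E → Prop) (a b : E) : Prop := le a b ∧ a ≠ b

/-- A source: no incoming edges. -/
def IsSource (t : E → V) (v : V) : Prop := inE t v = ∅

/-- A sink: no outgoing edges. -/
def IsSink (s : E → V) (v : V) : Prop := outE s v = ∅

/-- A progressive graph: acyclic and every source and every sink has degree 1. -/
def Progressive (s t : E → V) : Prop :=
  Acyclic s t ∧
  ∀ v, (IsSource t v ∨ IsSink s v) → ({e | s e = v ∨ t e = v} : Set E).ncard = 1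

/-- `I(G)`: input edges, those whose source vertex is a source of `G`. -/
def inputE (s t : E → V) : Set E := {e | IsSource t (s e)}

/-- `O(G)`: output edges, those whose target vertex is a sink of `G`. -/
def outputE (s t : E → V) : Set E := {e | IsSink s (t e)}

/-- Condition (U1) = (P1): `e1 → e2` implies `e1 ≺ e2`. -/
def U1 (s t : E → V) (le : E → E → Prop) : Prop :=
  ∀ e1 e2, eReach s t e1 e2 → ltOf le e1 e2

/-- Condition (U2): for every vertex `v`, `Ī(v) ∩ Ō(v) = ∅` and `Ē(v) = Ī(v) ∪ Ō(v)`. -/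
def U2 (s t : E → V) (le : E → E → Prop) : Prop :=
  ∀ v, hull le (inE t v) ∩ hull le (outE s v) = ∅ ∧
    hull le (inE t v ∪ outE s v) = hull le (inE t v) ∪ hull le (outE s v)

/-- Condition (U3). -/
def U3 (s t : E → V) (le : E → E → Prop) : Prop :=
  ∀ v1 v2,
    ((inE t v1 ∩ hull le (inE t v2)).Nonempty →
      hull le (inE t v1) ⊆ hull le (inE t v2)) ∧
    ((outE s v1 ∩ hull le (outE s v2)).Nonempty →
      hull le (outE s v1) ⊆ hull le (outE s v2))

/-- Condition (U4): for every progressive vertex `v`, `I(G) ∩ Ō(v) = ∅` and `O(G) ∩ Ī(v) = ∅`. -/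
def U4 (s t : E → V) (le : E → E → Prop) : Prop :=
  ∀ v, ¬ IsSource t v → ¬ IsSink s v →
    inputE s t ∩ hull le (outE s v) = ∅ ∧ outputE s t ∩ hull le (inE t v) = ∅

/-- An upward planar order: a linear order on the edges satisfying (U1), (U2), (U3). -/
def IsUPO (s t : E → V) (le : E → E → Prop) : Prop :=
  IsLinearOrder E le ∧ U1 s t le ∧ U2 s t le ∧ U3 s t le

/-- Condition (P2). -/
def P2 (s t : E → V) (le : E → E → Prop) : Prop :=
  ∀ e1 e2 e3, ltOf le e1 e2 → ltOf le e2 e3 → eReach s t e1 e3 →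
    eReach s t e1 e2 ∨ eReach s t e2 e3

/-- Condition (P̃2). -/
def P2t (s t : E → V) (le : E → E → Prop) : Prop :=
  ∀ e1 e2 e3, ltOf le e1 e2 → ltOf le e2 e3 → t e1 = s e3 →
    eReach s t e1 e2 ∨ eReach s t e2 e3

/-- Condition (P3) (for distinct vertices). -/
def P3 (s t : E → V) (le : E → E → Prop) : Prop :=
  ∀ v1 v2, v1 ≠ v2 →
    ((inE t v1 ∩ hull le (inE t v2)).Nonempty → vReach s t v1 v2) ∧
    ((outE s v1 ∩ hull le (outE s v2)).Nonempty → vReach s t v2 v1)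

/-- Condition (A): for distinct `v1 v2`, `∅ ≠ Ī(v1) ⊆ Ī(v2)` implies `v1 → v2`,
and `∅ ≠ Ō(v1) ⊆ Ō(v2)` implies `v2 → v1`. -/
def CondA (s t : E → V) (le : E → E → Prop) : Prop :=
  ∀ v1 v2, v1 ≠ v2 →
    ((hull le (inE t v1)).Nonempty → hull le (inE t v1) ⊆ hull le (inE t v2) →
      vReach s t v1 v2) ∧
    ((hull le (outE s v1)).Nonempty → hull le (outE s v1) ⊆ hull le (outE s v2) →
      vReach s t v2 v1)

/-- A POP-graph: a progressive graph with a planar order ((P1) and (P2)). -/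
def IsPOP (s t : E → V) (le : E → E → Prop) : Prop :=
  Progressive s t ∧ IsLinearOrder E le ∧ U1 s t le ∧ P2 s t le

/-- `U(v) = {w | Ō(v) ⊊ Ō(w)}` when `O(v) ≠ ∅`, and `U(v) = ∅` otherwise. -/
def Uset (s : E → V) (le : E → E → Prop) (v : V) : Set V :=
  {w | (outE s v).Nonempty ∧ hull le (outE s v) ⊂ hull le (outE s w)}

/-- `D(v) = {w | Ī(v) ⊊ Ī(w)}` when `I(v) ≠ ∅`, and `D(v) = ∅` otherwise. -/
def Dset (t : E → V) (le : E → E → Prop) (v : V) : Set V :=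
  {w | (inE t v).Nonempty ∧ hull le (inE t v) ⊂ hull le (inE t w)}

/-- A CPP-extension of `G = (s, t)`: a POP-graph `(s', t', le')` with an embedding
`(φ0, φ1)` satisfying (E1)–(E4). -/
def IsCPP {V' E' : Type} (s t : E → V) (s' t' : E' → V')
    (le' : E' → E' → Prop) (φ0 : V → V') (φ1 : E → E') : Prop :=
  Function.Injective φ0 ∧ Function.Injective φ1 ∧
  (∀ e, s' (φ1 e) = φ0 (s e)) ∧ (∀ e, t' (φ1 e) = φ0 (t e)) ∧
  IsPOP s' t' le' ∧
  -- (E1)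
  Set.range φ0 = {v : V' | ¬ IsSource t' v ∧ ¬ IsSink s' v} ∧
  -- (E2)
  Nat.card E' = Nat.card E + ({v : V | IsSource t v}).ncard + ({v : V | IsSink s v}).ncard ∧
  -- (E3)
  (∀ v w, IsSource t v → IsSink s w → inE t' (φ0 v) ∩ outE s' (φ0 w) = ∅) ∧
  -- (E4)
  (∀ e' : E', e' ∉ Set.range φ1 → e' ∉ inputE s' t' → e' ∉ outputE s' t' →
    ((∃ a ∈ outE s' (s' e'), ltOf le' a e') ∧ (∃ b ∈ outE s' (s' e'), ltOf le' e' b)) ∨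
    ((∃ a ∈ inE t' (t' e'), ltOf le' a e') ∧ (∃ b ∈ inE t' (t' e'), ltOf le' e' b)))
section Helpers

variable {s t : E → V} {le : E → E → Prop}

lemma hle_refl (hlin : IsLinearOrder E le) (a : E) : le a a :=
  hlin.toIsPartialOrder.toIsPreorder.toRefl.refl a

lemma hle_trans (hlin : IsLinearOrder E le) {a b c : E} :
    le a b → le b c → le a c :=
  hlin.toIsPartialOrder.toIsPreorder.toIsTrans.trans a b c

lemma hle_antisymm (hlin : IsLinearOrder E le) {a b : E} :
    le a b → le b a → a = b :=
  hlin.toIsPartialOrder.toAntisymm.antisymm a b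

lemma hle_total (hlin : IsLinearOrder E le) (a b : E) : le a b ∨ le b a :=
  hlin.toTotal.total a b

lemma slt_of_not_le (hlin : IsLinearOrder E le) {a b : E} (h : ¬ le a b) :
    ltOf le b a := by
  rcases hle_total hlin a b with h' | h'
  · exact absurd h' h
  · exact ⟨h', fun he => h (he ▸ hle_refl hlin b)⟩

lemma slt_asymm (hlin : IsLinearOrder E le) {a b : E}
    (h1 : ltOf le a b) (h2 : ltOf le b a) : False :=
  h1.2 (hle_antisymm hlin h1.1 h2.1)

lemma slt_of_le_of_lt (hlin : IsLinearOrder E le) {a b c : E}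
    (h1 : le a b) (h2 : ltOf le b c) : ltOf le a c := by
  refine ⟨hle_trans hlin h1 h2.1, fun he => ?_⟩
  exact h2.2 (hle_antisymm hlin h2.1 (he ▸ h1))

lemma slt_of_lt_of_le (hlin : IsLinearOrder E le) {a b c : E}
    (h1 : ltOf le a b) (h2 : le b c) : ltOf le a c := by
  refine ⟨hle_trans hlin h1.1 h2, fun he => ?_⟩
  exact h1.2 (hle_antisymm hlin h1.1 (he.symm ▸ h2))

lemma slt_trichotomy (hlin : IsLinearOrder E le) (a b : E) :
    a = b ∨ ltOf le a b ∨ ltOf le b a := by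
  by_cases he : a = b
  · exact Or.inl he
  rcases hle_total hlin a b with h | h
  · exact Or.inr (Or.inl ⟨h, he⟩)
  · exact Or.inr (Or.inr ⟨h, Ne.symm he⟩)

lemma eReach_trans {a b c : E} (h1 : eReach s t a b) (h2 : eReach s t b c) :
    eReach s t a c := Relation.TransGen.trans h1 h2

lemma vReach_trans {a b c : V} (h1 : vReach s t a b) (h2 : vReach s t b c) :
    vReach s t a c := Relation.TransGen.trans h1 h2

lemma eReach_vReach_tt {e f : E} (h : eReach s t e f) :
    vReach s t (t e) (t f) := by
  induction h with
  | single h => exact Relation.TransGen.single ⟨_, h.symm, rfl⟩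
  | tail h hr ih => exact ih.tail ⟨_, hr.symm, rfl⟩

lemma eReach_vReach_ss {e f : E} (h : eReach s t e f) :
    vReach s t (s e) (s f) := by
  induction h with
  | single h => exact Relation.TransGen.single ⟨_, rfl, h⟩
  | tail h hr ih => exact ih.tail ⟨_, rfl, hr⟩

lemma exists_in_of_vReach {e : E} {w v : V} (he : t e = w) (h : vReach s t w v) :
    ∃ i, t i = v ∧ eReach s t e i := by
  induction h with
  | single h =>
    obtain ⟨g, hg1, hg2⟩ := h
    exact ⟨g, hg2, Relation.TransGen.single (he.trans hg1.symm)⟩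
  | tail h hr ih =>
    obtain ⟨g, hg1, hg2⟩ := hr
    obtain ⟨i, hi, hre⟩ := ih
    exact ⟨g, hg2, hre.tail (hi.trans hg1.symm)⟩

lemma exists_out_of_vReach {e : E} {w v : V} (he : s e = w) (h : vReach s t v w) :
    ∃ o, s o = v ∧ eReach s t o e := by
  induction h using Relation.TransGen.head_induction_on with
  | single h =>
    obtain ⟨g, hg1, hg2⟩ := h
    exact ⟨g, hg1, Relation.TransGen.single (hg2.trans he.symm)⟩
  | head h h' ihh =>
    obtain ⟨g, hg1, hg2⟩ := h
    obtain ⟨o, ho, hre⟩ := ihh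
    exact ⟨g, hg1, Relation.TransGen.head (hg2.trans ho.symm) hre⟩

/-- head decomposition of an edge path -/
lemma eReach_head {a y : E} (h : eReach s t a y) :
    ∃ f, t a = s f ∧ (f = y ∨ eReach s t f y) := by
  obtain ⟨c, hc, hcy⟩ := (Relation.TransGen.head'_iff).mp h
  rcases Relation.reflTransGen_iff_eq_or_transGen.mp hcy with he | hcy
  · exact ⟨c, hc, Or.inl he.symm⟩
  · exact ⟨c, hc, Or.inr hcy⟩

/-- tail decomposition of an edge path -/
lemma eReach_tail {y b : E} (h : eReach s t y b) :
    ∃ f, (f = y ∨ eReach s t y f) ∧ t f = s b := by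
  cases h with
  | single h => exact ⟨y, Or.inl rfl, h⟩
  | tail h hr => exact ⟨_, Or.inr h, hr⟩

lemma mem_hull_self (hlin : IsLinearOrder E le) {X : Set E} {x : E}
    (hx : x ∈ X) : x ∈ hull le X :=
  ⟨x, hx, x, hx, hle_refl hlin x, hle_refl hlin x⟩

/-- an incoming edge precedes an outgoing edge at the same vertex -/
lemma slt_in_out (hP1 : U1 s t le) {i o : E} {v : V}
    (hi : t i = v) (ho : s o = v) : ltOf le i o :=
  hP1 _ _ (Relation.TransGen.single (hi.trans ho.symm))

lemma exists_out_of_two_in (hprog : Progressive s t) {a b : E} {v : V}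
    (ha : t a = v) (hb : t b = v) (hab : a ≠ b) : ∃ g, s g = v := by
  by_contra h
  push_neg at h
  have hsink : IsSink s v := by
    ext g; simp only [outE, Set.mem_setOf_eq, Set.mem_empty_iff_false, iff_false]
    exact h g
  obtain ⟨x, hx⟩ := Set.ncard_eq_one.mp (hprog.2 v (Or.inr hsink))
  have h1 : a ∈ ({e | s e = v ∨ t e = v} : Set E) := Or.inr ha
  have h2 : b ∈ ({e | s e = v ∨ t e = v} : Set E) := Or.inr hb
  rw [hx] at h1 h2
  exact hab (h1.trans h2.symm)

lemma exists_in_of_two_out (hprog : Progressive s t) {a b : E} {v : V}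
    (ha : s a = v) (hb : s b = v) (hab : a ≠ b) : ∃ g, t g = v := by
  by_contra h
  push_neg at h
  have hsrc : IsSource t v := by
    ext g; simp only [inE, Set.mem_setOf_eq, Set.mem_empty_iff_false, iff_false]
    exact h g
  obtain ⟨x, hx⟩ := Set.ncard_eq_one.mp (hprog.2 v (Or.inl hsrc))
  have h1 : a ∈ ({e | s e = v ∨ t e = v} : Set E) := Or.inl ha
  have h2 : b ∈ ({e | s e = v ∨ t e = v} : Set E) := Or.inl hb
  rw [hx] at h1 h2
  exact hab (h1.trans h2.symm)

/-- Key lemma: under (P1), (P2), an edge in the hull of `I(v)` either lands at `v`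
or reaches an edge landing at `v`. -/
lemma reach_of_mem_hull_in (hlin : IsLinearOrder E le) (hprog : Progressive s t)
    (hP1 : U1 s t le) (hP2 : P2 s t le) {v : V} {e : E}
    (he : e ∈ hull le (inE t v)) : t e = v ∨ ∃ i, t i = v ∧ eReach s t e i := by
  obtain ⟨a, ha, b, hb, hae, heb⟩ := he
  by_cases htv : t e = v
  · exact Or.inl htv
  have hane : a ≠ e := fun h => htv (h ▸ ha)
  have hbne : e ≠ b := fun h => htv (h ▸ hb)
  have hab : a ≠ b := by
    intro h
    exact hane (hle_antisymm hlin hae (h ▸ heb))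
  obtain ⟨g, hg⟩ := exists_out_of_two_in hprog ha hb hab
  have hag : eReach s t a g := Relation.TransGen.single (ha.trans hg.symm)
  have hbg : ltOf le b g := slt_in_out hP1 hb hg
  have heg : ltOf le e g := slt_of_le_of_lt hlin heb hbg
  rcases hP2 a e g ⟨hae, hane⟩ heg hag with h | h
  · obtain ⟨f, hf, hfe⟩ := eReach_head h
    have hsf : s f = v := hf.symm.trans ha
    have hbf : ltOf le b f := slt_in_out hP1 hb hsf
    rcases hfe with rfl | hfe
    · exact absurd (hle_antisymm hlin heb hbf.1) hbne
    · have hfe' := hP1 _ _ hfe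
      exact absurd (hle_antisymm hlin hfe'.1 (hle_trans hlin heb hbf.1)) hfe'.2
  · obtain ⟨f, hf, htf⟩ := eReach_tail h
    have htf' : t f = v := htf.trans hg
    rcases hf with rfl | hf
    · exact absurd htf' htv
    · exact Or.inr ⟨f, htf', hf⟩

/-- Dual key lemma for `O(v)`. -/
lemma reach_of_mem_hull_out (hlin : IsLinearOrder E le) (hprog : Progressive s t)
    (hP1 : U1 s t le) (hP2 : P2 s t le) {v : V} {e : E}
    (he : e ∈ hull le (outE s v)) : s e = v ∨ ∃ o, s o = v ∧ eReach s t o e := by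
  obtain ⟨a, ha, b, hb, hae, heb⟩ := he
  by_cases hsv : s e = v
  · exact Or.inl hsv
  have hane : a ≠ e := fun h => hsv (h ▸ ha)
  have hbne : e ≠ b := fun h => hsv (h ▸ hb)
  have hab : a ≠ b := by
    intro h
    exact hane (hle_antisymm hlin hae (h ▸ heb))
  obtain ⟨g, hg⟩ := exists_in_of_two_out hprog ha hb hab
  have hgb : eReach s t g b := Relation.TransGen.single (hg.trans hb.symm)
  have hga : ltOf le g a := slt_in_out hP1 hg ha
  have hge : ltOf le g e := slt_of_lt_of_le hlin hga hae
  rcases hP2 g e b hge ⟨heb, hbne⟩ hgb with h | h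
  · obtain ⟨f, hf, hfe⟩ := eReach_head h
    have hsf : s f = v := hf.symm.trans hg
    rcases hfe with rfl | hfe
    · exact absurd hsf hsv
    · exact Or.inr ⟨f, hsf, hfe⟩
  · obtain ⟨f, hf, htf⟩ := eReach_tail h
    have htf' : t f = v := htf.trans hb
    have hfa : ltOf le f a := slt_in_out hP1 htf' ha
    rcases hf with rfl | hf
    · exact absurd (hle_antisymm hlin hae hfa.1) hane
    · have hfe' := hP1 _ _ hf
      exact absurd (hle_antisymm hlin hfe'.1 (hle_trans hlin hfa.1 hae)) hfe'.2

lemma U3in_of_P2 (hlin : IsLinearOrder E le) (hprog : Progressive s t)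
    (hP1 : U1 s t le) (hP2 : P2 s t le) (v1 v2 : V)
    (hNE : (inE t v1 ∩ hull le (inE t v2)).Nonempty) :
    hull le (inE t v1) ⊆ hull le (inE t v2) := by
  by_cases hv : v1 = v2
  · subst hv; exact fun _ h => h
  obtain ⟨e, he1, he2⟩ := hNE
  have he1 : t e = v1 := he1
  have hre : vReach s t v1 v2 := by
    rcases reach_of_mem_hull_in hlin hprog hP1 hP2 he2 with h | ⟨i, hi, hr⟩
    · exact absurd (he1.symm.trans h) hv
    · have := eReach_vReach_tt hr
      rwa [he1, hi] at this
  rintro y ⟨a, ha, b, hb, hay, hyb⟩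
  obtain ⟨ib, hib, hrb⟩ := exists_in_of_vReach hb hre
  have hyub : le y ib := hle_trans hlin hyb (hP1 _ _ hrb).1
  obtain ⟨a2, ha2, b2, hb2, h1, h2⟩ := he2
  rcases hle_total hlin a2 y with h | h
  · exact ⟨a2, ha2, ib, hib, h, hyub⟩
  · have ha2hull : a2 ∈ hull le (inE t v1) :=
      ⟨a, ha, e, he1, hle_trans hlin hay h, h1⟩
    rcases reach_of_mem_hull_in hlin hprog hP1 hP2 ha2hull with h' | ⟨i, hi, hr⟩
    · exact absurd ((ha2 : t a2 = v2).symm.trans h') (Ne.symm hv)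
    · have hrev : vReach s t v2 v1 := by
        have := eReach_vReach_tt hr
        rwa [(ha2 : t a2 = v2), hi] at this
      exact absurd (vReach_trans hre hrev) (hprog.1 v1)

lemma U3out_of_P2 (hlin : IsLinearOrder E le) (hprog : Progressive s t)
    (hP1 : U1 s t le) (hP2 : P2 s t le) (v1 v2 : V)
    (hNE : (outE s v1 ∩ hull le (outE s v2)).Nonempty) :
    hull le (outE s v1) ⊆ hull le (outE s v2) := by
  by_cases hv : v1 = v2
  · subst hv; exact fun _ h => h
  obtain ⟨e, he1, he2⟩ := hNE
  have he1 : s e = v1 := he1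
  have hre : vReach s t v2 v1 := by
    rcases reach_of_mem_hull_out hlin hprog hP1 hP2 he2 with h | ⟨o, ho, hr⟩
    · exact absurd (he1.symm.trans h) hv
    · have := eReach_vReach_ss hr
      rwa [he1, ho] at this
  rintro y ⟨a, ha, b, hb, hay, hyb⟩
  obtain ⟨oa, hoa, hra⟩ := exists_out_of_vReach ha hre
  have hylb : le oa y := hle_trans hlin (hP1 _ _ hra).1 hay
  obtain ⟨a2, ha2, b2, hb2, h1, h2⟩ := he2
  rcases hle_total hlin y b2 with h | h
  · exact ⟨oa, hoa, b2, hb2, hylb, h⟩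
  · have hb2hull : b2 ∈ hull le (outE s v1) :=
      ⟨e, he1, b, hb, h2, hle_trans hlin h hyb⟩
    rcases reach_of_mem_hull_out hlin hprog hP1 hP2 hb2hull with h' | ⟨o, ho, hr⟩
    · exact absurd ((hb2 : s b2 = v2).symm.trans h') (Ne.symm hv)
    · have hrev : vReach s t v1 v2 := by
        have := eReach_vReach_ss hr
        rwa [(hb2 : s b2 = v2), ho] at this
      exact absurd (vReach_trans hre hrev) (hprog.1 v2)

lemma U2_of_P2 (hlin : IsLinearOrder E le) (hP1 : U1 s t le)
    (hP2 : P2 s t le) : U2 s t le := by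
  intro v
  constructor
  · ext y
    simp only [Set.mem_inter_iff, Set.mem_empty_iff_false, iff_false, not_and]
    rintro ⟨a1, ha1, b1, hb1, h1, h2⟩ ⟨a2, ha2, b2, hb2, h3, h4⟩
    have hba := slt_in_out hP1 (hb1 : t b1 = v) (ha2 : s a2 = v)
    exact hba.2 (hle_antisymm hlin hba.1 (hle_trans hlin h3 h2))
  · apply Set.Subset.antisymm
    · rintro y ⟨a, ha, b, hb, hay, hyb⟩
      rcases ha with ha | ha <;> rcases hb with hb | hb
      · exact Or.inl ⟨a, ha, b, hb, hay, hyb⟩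
      · -- a ∈ I, b ∈ O
        by_contra hy
        have hyI : y ∉ hull le (inE t v) := fun h => hy (Or.inl h)
        have hyO : y ∉ hull le (outE s v) := fun h => hy (Or.inr h)
        have h1 : ∀ f, t f = v → ltOf le f y := fun f hf =>
          slt_of_not_le hlin (fun hyf => hyI ⟨a, ha, f, hf, hay, hyf⟩)
        have h2 : ∀ f, s f = v → ltOf le y f := fun f hf =>
          slt_of_not_le hlin (fun hfy => hyO ⟨f, hf, b, hb, hfy, hyb⟩)
        have hab : eReach s t a b :=
          Relation.TransGen.single ((ha : t a = v).trans (hb : s b = v).symm)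
        rcases hP2 a y b (h1 a ha) (h2 b hb) hab with h | h
        · obtain ⟨f, hf, hfy⟩ := eReach_head h
          have hsf : s f = v := hf.symm.trans ha
          rcases hfy with rfl | hfy
          · exact (h2 f hsf).2 rfl
          · exact slt_asymm hlin (hP1 _ _ hfy) (h2 f hsf)
        · obtain ⟨f, hf, htf⟩ := eReach_tail h
          have htf' : t f = v := htf.trans hb
          rcases hf with rfl | hf
          · exact (h1 f htf').2 rfl
          · exact slt_asymm hlin (hP1 _ _ hf) (h1 f htf')
      · -- a ∈ O, b ∈ I : impossible
        have hba := slt_in_out hP1 (hb : t b = v) (ha : s a = v)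
        exact absurd (hle_antisymm hlin hba.1 (hle_trans hlin hay hyb)) hba.2
      · exact Or.inr ⟨a, ha, b, hb, hay, hyb⟩
    · rintro y (⟨a, ha, b, hb, h1, h2⟩ | ⟨a, ha, b, hb, h1, h2⟩)
      · exact ⟨a, Or.inl ha, b, Or.inl hb, h1, h2⟩
      · exact ⟨a, Or.inr ha, b, Or.inr hb, h1, h2⟩

lemma CondA_of_P2 (hlin : IsLinearOrder E le) (hprog : Progressive s t)
    (hP1 : U1 s t le) (hP2 : P2 s t le) : CondA s t le := by
  intro v1 v2 hne
  constructor
  · rintro ⟨y, a, ha, b, hb, _, _⟩ hsub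
    have ha' : a ∈ hull le (inE t v2) := hsub (mem_hull_self hlin ha)
    rcases reach_of_mem_hull_in hlin hprog hP1 hP2 ha' with h | ⟨i, hi, hr⟩
    · exact absurd ((ha : t a = v1).symm.trans h) hne
    · have := eReach_vReach_tt hr
      rwa [(ha : t a = v1), hi] at this
  · rintro ⟨y, a, ha, b, hb, _, _⟩ hsub
    have ha' : a ∈ hull le (outE s v2) := hsub (mem_hull_self hlin ha)
    rcases reach_of_mem_hull_out hlin hprog hP1 hP2 ha' with h | ⟨o, ho, hr⟩
    · exact absurd ((ha : s a = v1).symm.trans h) hne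
    · have := eReach_vReach_ss hr
      rwa [(ha : s a = v1), ho] at this

lemma P2t_of_UPO (hlin : IsLinearOrder E le) (hU2 : U2 s t le)
    (hU3 : U3 s t le) (hA : CondA s t le) : P2t s t le := by
  intro e1 e2 e3 h12 h23 hts
  have he2 : e2 ∈ hull le (inE t (t e1) ∪ outE s (t e1)) :=
    ⟨e1, Or.inl rfl, e3, Or.inr hts.symm, h12.1, h23.1⟩
  rw [(hU2 (t e1)).2] at he2
  rcases he2 with hI | hO
  · by_cases hw : t e2 = t e1
    · exact Or.inr (Relation.TransGen.single (hw.trans hts))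
    · have hsub := (hU3 (t e2) (t e1)).1 ⟨e2, rfl, hI⟩
      have hne : (hull le (inE t (t e2))).Nonempty :=
        ⟨e2, mem_hull_self hlin rfl⟩
      have hre := (hA (t e2) (t e1) hw).1 hne hsub
      obtain ⟨i, hi, hr⟩ := exists_in_of_vReach rfl hre
      exact Or.inr (hr.tail (hi.trans hts))
  · by_cases hw : s e2 = t e1
    · exact Or.inl (Relation.TransGen.single hw.symm)
    · have hsub := (hU3 (s e2) (t e1)).2 ⟨e2, rfl, hO⟩
      have hne : (hull le (outE s (s e2))).Nonempty :=
        ⟨e2, mem_hull_self hlin rfl⟩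
      have hre := (hA (s e2) (t e1) hw).2 hne hsub
      obtain ⟨o, ho, hr⟩ := exists_out_of_vReach rfl hre
      exact Or.inl (Relation.TransGen.head ho.symm hr)

lemma P2_of_P2t (hlin : IsLinearOrder E le) (hp2t : P2t s t le) :
    P2 s t le := by
  have key : ∀ {e1 e3}, eReach s t e1 e3 →
      ∀ e2, ltOf le e1 e2 → ltOf le e2 e3 →
      eReach s t e1 e2 ∨ eReach s t e2 e3 := by
    intro e1 e3 h
    induction h with
    | single h => exact fun e2 h12 h23 => hp2t _ _ _ h12 h23 h
    | @tail f e3' h hr ih =>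
      intro e2 h12 h23
      rcases slt_trichotomy hlin e2 f with heq | hlt | hgt
      · subst heq
        exact Or.inr (Relation.TransGen.single hr)
      · rcases ih e2 h12 hlt with h' | h'
        · exact Or.inl h'
        · exact Or.inr (h'.tail hr)
      · rcases hp2t f e2 e3' hgt h23 hr with h' | h'
        · exact Or.inl (eReach_trans h h')
        · exact Or.inr h'
  exact fun e1 e2 e3 h12 h23 h13 => key h13 e2 h12 h23

end Helpers

/-- for a progressive graph with (P1): (P2) ↔ ((U2), (U3) and (A)),
i.e. being a POP-graph is equivalent to being an anchored UPO-graph. -/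
theorem P2_iff_anchored_UPO {V E : Type} [Fintype V] [Fintype E]
    (s t : E → V) (le : E → E → Prop) (hlin : IsLinearOrder E le)
    (hprog : Progressive s t) (hP1 : U1 s t le) :
    P2 s t le ↔ (U2 s t le ∧ U3 s t le ∧ CondA s t le) := by
  constructor
  · intro hP2
    refine ⟨U2_of_P2 hlin hP1 hP2, ?_, CondA_of_P2 hlin hprog hP1 hP2⟩
    exact fun v1 v2 =>
      ⟨U3in_of_P2 hlin hprog hP1 hP2 v1 v2, U3out_of_P2 hlin hprog hP1 hP2 v1 v2⟩
  · rintro ⟨hU2, hU3, hA⟩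
    exact P2_of_P2t hlin (P2t_of_UPO hlin hU2 hU3 hA)
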